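/- The number of idempotent elements of the semigroup P_n of partial transformations on {1,...,n} equals the sum over k from 0 to n of binomial(n,k) * (k+1)^(n-k). -/

import Mathlib

/-- Composition of partial transformations on `{1,…,n}`, encoded as functions
`Fin n → Option (Fin n)` (`none` = undefined): `pcomp f g = f ∘ g`. -/
def pcomp {n : ℕ} (f g : Fin n → Option (Fin n)) : Fin n → Option (Fin n) :=
  fun x => (g x).bind f

namespace AuxIdem

variable {n : ℕ}

def fixSet (e : Fin n → Option (Fin n)) : Finset (Fin n) :=
  Finset.univ.filter (fun y => e y = some y)

lemma mem_fixSet {e : Fin n → Option (Fin n)} {y : Fin n} :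
    y ∈ fixSet e ↔ e y = some y := by simp [fixSet]

lemma image_mem {e : Fin n → Option (Fin n)} (he : pcomp e e = e) {x y : Fin n}
    (h : e x = some y) : y ∈ fixSet e := by
  rw [mem_fixSet]
  have := congrFun he x
  simpa [pcomp, h] using this

def bwdFun (s : Finset (Fin n)) (g : {x : Fin n // x ∉ s} → Option {y : Fin n // y ∈ s}) :
    Fin n → Option (Fin n) :=
  fun x => if h : x ∈ s then some x else (g ⟨x, h⟩).map Subtype.val

lemma bwd_idem (s : Finset (Fin n)) (g : {x : Fin n // x ∉ s} → Option {y : Fin n // y ∈ s}) :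
    pcomp (bwdFun s g) (bwdFun s g) = bwdFun s g := by
  funext x
  by_cases h : x ∈ s
  · simp [pcomp, bwdFun, h]
  · simp only [pcomp, bwdFun, dif_neg h]
    cases hg : g ⟨x, h⟩ with
    | none => simp
    | some y => simp [bwdFun, y.2]

lemma fixSet_bwd (s : Finset (Fin n)) (g : {x : Fin n // x ∉ s} → Option {y : Fin n // y ∈ s}) :
    fixSet (bwdFun s g) = s := by
  ext y
  rw [mem_fixSet]
  constructor
  · intro hy
    by_contra h
    rw [bwdFun] at hy
    rw [dif_neg h] at hy
    cases hg : g ⟨y, h⟩ with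
    | none => rw [hg] at hy; simp at hy
    | some z =>
      rw [hg] at hy
      simp only [Option.map_some, Option.some.injEq] at hy
      exact h (hy ▸ z.2)
  · intro hy
    rw [bwdFun]
    rw [dif_pos hy]

lemma map_pmap_val {p : Fin n → Prop} (o : Option (Fin n)) (H : ∀ y ∈ o, p y) :
    Option.map Subtype.val (o.pmap (fun y h => (⟨y, h⟩ : {y // p y})) H) = o := by
  cases o <;> simp

lemma pmap_map_val {p : Fin n → Prop} (o : Option {y // p y})
    (H : ∀ y ∈ o.map Subtype.val, p y) :
    (o.map Subtype.val).pmap (fun y h => (⟨y, h⟩ : {y // p y})) H = o := by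
  cases o <;> simp

def fiberEquiv (s : Finset (Fin n)) :
    {e : Fin n → Option (Fin n) // pcomp e e = e ∧ fixSet e = s} ≃
      ({x : Fin n // x ∉ s} → Option {y : Fin n // y ∈ s}) where
  toFun e x := (e.1 x.1).pmap (fun y h => ⟨y, h⟩)
    (fun y hy => by
      have := image_mem e.2.1 (Option.mem_def.mp hy)
      rwa [e.2.2] at this)
  invFun g := ⟨bwdFun s g, bwd_idem s g, fixSet_bwd s g⟩
  left_inv e := by
    apply Subtype.ext
    funext x
    by_cases h : x ∈ s
    · have hx : e.1 x = some x := mem_fixSet.mp (by rw [e.2.2]; exact h)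
      simp [bwdFun, h, hx]
    · simp only [bwdFun, dif_neg h]
      exact map_pmap_val _ _
  right_inv g := by
    funext x
    obtain ⟨x, hx⟩ := x
    simp only [bwdFun, dif_neg hx]
    exact pmap_map_val _ _

end AuxIdem

open AuxIdem in
/-- The number of idempotents in the semigroup `P_n` of partial transformations on
`{1,…,n}` equals `∑_{k=0}^n (n.choose k) * (k+1)^(n-k)`. -/
theorem numIdempotentsPartialTransformations (n : ℕ) :
    Fintype.card {e : Fin n → Option (Fin n) // pcomp e e = e} =
      ∑ k ∈ Finset.range (n + 1), Nat.choose n k * (k + 1) ^ (n - k) := by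
  classical
  rw [Fintype.card_subtype]
  rw [Finset.card_eq_sum_card_fiberwise
    (f := fixSet) (t := (Finset.univ : Finset (Finset (Fin n))))
    (fun e _ => Finset.mem_univ _)]
  have key : ∀ s : Finset (Fin n),
      ((Finset.univ.filter (fun e : Fin n → Option (Fin n) => pcomp e e = e)).filter
        (fun e => fixSet e = s)).card = (s.card + 1) ^ (n - s.card) := by
    intro s
    have h1 : ((Finset.univ.filter (fun e : Fin n → Option (Fin n) => pcomp e e = e)).filter
        (fun e => fixSet e = s)) =
        Finset.univ.filter (fun e : Fin n → Option (Fin n) => pcomp e e = e ∧ fixSet e = s) := by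
      rw [Finset.filter_filter]
    rw [h1, ← Fintype.card_subtype]
    rw [Fintype.card_congr (fiberEquiv s)]
    rw [Fintype.card_fun]
    congr 1
    · rw [Fintype.card_option, Fintype.card_coe]
    · rw [Fintype.card_subtype_compl, Fintype.card_coe, Fintype.card_fin]
  simp only [key]
  rw [← Finset.powerset_univ, Finset.sum_powerset]
  simp only [Finset.card_univ, Fintype.card_fin]
  refine Finset.sum_congr rfl (fun k hk => ?_)
  rw [Finset.sum_congr rfl (fun s hs => by
    rw [(Finset.mem_powersetCard.mp hs).2]), Finset.sum_const, smul_eq_mul,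
    Finset.card_powersetCard, Finset.card_univ, Fintype.card_fin]
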